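/- Let p be a prime, z ∈ ℤ_p, and let k, l ≥ 0 be integers. Then the Haar volume of the set {x ∈ ℤ_p : p^k divides x(x − p^l) − z} is at most 2 · p^{−⌈k/2⌉}. -/

import Mathlib

open MeasureTheory
open scoped ENNReal

/-- The Borel σ-algebra on the `p`-adic integers. -/
noncomputable instance padicMeasurableSpace (p : ℕ) [Fact p.Prime] :
    MeasurableSpace ℤ_[p] := borel _

instance padicBorelSpace (p : ℕ) [Fact p.Prime] : BorelSpace ℤ_[p] := ⟨rfl⟩

/-- The Haar measure on `ℤ_p`, normalized so that `vol (ℤ_p) = 1`. -/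
noncomputable def padicHaar (p : ℕ) [Fact p.Prime] : Measure ℤ_[p] :=
  Measure.addHaarMeasure
    ⟨⟨Set.univ, isCompact_univ⟩, by rw [interior_univ]; exact Set.univ_nonempty⟩

section Aux

variable (p : ℕ) [Fact p.Prime]

instance padicHaar_invariant : (padicHaar p).IsAddLeftInvariant := by
  unfold padicHaar; infer_instance

lemma padicHaar_univ : padicHaar p Set.univ = 1 := by
  have := Measure.addHaarMeasure_self
    (K₀ := (⟨⟨Set.univ, isCompact_univ⟩, by
      rw [interior_univ]; exact Set.univ_nonempty⟩ : TopologicalSpace.PositiveCompacts ℤ_[p]))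
  simpa [padicHaar] using this

lemma dvd_set_eq (m : ℕ) :
    {x : ℤ_[p] | (p : ℤ_[p]) ^ m ∣ x} = Metric.closedBall 0 ((p : ℝ) ^ (-(m : ℤ))) := by
  ext x
  simp only [Set.mem_setOf_eq, Metric.mem_closedBall, dist_zero_right]
  rw [PadicInt.norm_le_pow_iff_mem_span_pow, Ideal.mem_span_singleton]

lemma measurable_dvd_set (m : ℕ) (c : ℤ_[p]) :
    MeasurableSet {x : ℤ_[p] | (p : ℤ_[p]) ^ m ∣ x - c} := by
  have : {x : ℤ_[p] | (p : ℤ_[p]) ^ m ∣ x - c}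
      = ((-c) + ·) ⁻¹' {x : ℤ_[p] | (p : ℤ_[p]) ^ m ∣ x} := by
    ext x; simp [Set.mem_preimage, neg_add_eq_sub]
  rw [this, dvd_set_eq]
  exact (measurable_const_add _) measurableSet_closedBall

/-- Measure of a coset of `p^m ℤ_p` equals that of `p^m ℤ_p`. -/
lemma padicHaar_coset (m : ℕ) (c : ℤ_[p]) :
    padicHaar p {x : ℤ_[p] | (p : ℤ_[p]) ^ m ∣ x - c}
      = padicHaar p {x : ℤ_[p] | (p : ℤ_[p]) ^ m ∣ x} := by
  have : {x : ℤ_[p] | (p : ℤ_[p]) ^ m ∣ x - c}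
      = ((-c) + ·) ⁻¹' {x : ℤ_[p] | (p : ℤ_[p]) ^ m ∣ x} := by
    ext x; simp [Set.mem_preimage, neg_add_eq_sub]
  rw [this]
  exact measure_preimage_add (padicHaar p) _ _

lemma padicHaar_pow_dvd (m : ℕ) :
    padicHaar p {x : ℤ_[p] | (p : ℤ_[p]) ^ m ∣ x} = ((p : ℝ≥0∞) ^ m)⁻¹ := by
  classical
  have hp : 1 < p := (Fact.out : p.Prime).one_lt
  -- univ is the disjoint union over r ∈ range (p^m) of the cosets r + p^m ℤ_p
  have hcover : Set.univ = ⋃ r ∈ Finset.range (p ^ m),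
      {x : ℤ_[p] | (p : ℤ_[p]) ^ m ∣ x - (r : ℤ_[p])} := by
    ext x
    simp only [Set.mem_univ, Set.mem_iUnion, true_iff, Finset.mem_range, Set.mem_setOf_eq]
    refine ⟨x.appr m, PadicInt.appr_lt x m, ?_⟩
    have := PadicInt.appr_spec m x
    rwa [Ideal.mem_span_singleton] at this
  have hdisj : (Finset.range (p ^ m) : Set ℕ).PairwiseDisjoint
      (fun r => {x : ℤ_[p] | (p : ℤ_[p]) ^ m ∣ x - (r : ℤ_[p])}) := by
    intro r hr s hs hrs
    simp only [Finset.coe_range, Set.mem_Iio] at hr hs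
    refine Set.disjoint_left.2 fun x hx hx' => hrs ?_
    simp only [Set.mem_setOf_eq] at hx hx'
    have hd : (p : ℤ_[p]) ^ m ∣ ((r : ℤ) - (s : ℤ) : ℤ) := by
      have := dvd_sub hx' hx
      have he : ((((r : ℤ) - (s : ℤ)) : ℤ) : ℤ_[p]) = (x - s) - (x - r) := by
        push_cast; ring
      rwa [he]
    rw [PadicInt.pow_p_dvd_int_iff] at hd
    have : (r : ℤ) = (s : ℤ) := by
      have hr' : (r : ℤ) < (p : ℤ) ^ m := by exact_mod_cast hr
      have hs' : (s : ℤ) < (p : ℤ) ^ m := by exact_mod_cast hs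
      have habs : |(r : ℤ) - (s : ℤ)| < (p : ℤ) ^ m := by
        rw [abs_sub_lt_iff]; omega
      have := Int.eq_zero_of_abs_lt_dvd hd habs
      omega
    exact_mod_cast this
  have hmeas : ∀ r ∈ Finset.range (p ^ m),
      MeasurableSet {x : ℤ_[p] | (p : ℤ_[p]) ^ m ∣ x - (r : ℤ_[p])} :=
    fun r _ => measurable_dvd_set p m _
  have hsum : padicHaar p Set.univ
      = ∑ r ∈ Finset.range (p ^ m),
          padicHaar p {x : ℤ_[p] | (p : ℤ_[p]) ^ m ∣ x - (r : ℤ_[p])} := by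
    rw [hcover]
    exact measure_biUnion_finset hdisj hmeas
  have hconst : ∀ r ∈ Finset.range (p ^ m),
      padicHaar p {x : ℤ_[p] | (p : ℤ_[p]) ^ m ∣ x - (r : ℤ_[p])}
        = padicHaar p {x : ℤ_[p] | (p : ℤ_[p]) ^ m ∣ x} :=
    fun r _ => padicHaar_coset p m _
  rw [Finset.sum_congr rfl hconst, Finset.sum_const, Finset.card_range,
    padicHaar_univ] at hsum
  have hpne : ((p : ℝ≥0∞) ^ m) ≠ 0 := by
    positivity
  have hpnt : ((p : ℝ≥0∞) ^ m) ≠ ⊤ := by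
    exact ENNReal.pow_ne_top (ENNReal.natCast_ne_top p)
  have hcast : ((p ^ m : ℕ) : ℝ≥0∞) = (p : ℝ≥0∞) ^ m := by push_cast; ring
  rw [nsmul_eq_mul, hcast] at hsum
  have h2 : ((p : ℝ≥0∞) ^ m)⁻¹ * ((p : ℝ≥0∞) ^ m * padicHaar p {x : ℤ_[p] | (p : ℤ_[p]) ^ m ∣ x})
      = ((p : ℝ≥0∞) ^ m)⁻¹ * 1 := by rw [← hsum]
  rwa [← mul_assoc, ENNReal.inv_mul_cancel hpne hpnt, one_mul, mul_one] at h2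

/-- If a prime power `q^k` divides a product, then `q^⌈k/2⌉` divides one of the factors. -/
lemma prime_pow_dvd_of_dvd_mul {α : Type*} [CommMonoidWithZero α] [IsCancelMulZero α] {q : α}
    (hq : Prime q) : ∀ (k : ℕ) (a b : α), q ^ k ∣ a * b →
      ∃ i j, i + j = k ∧ q ^ i ∣ a ∧ q ^ j ∣ b := by
  intro k
  induction k with
  | zero => exact fun a b _ => ⟨0, 0, rfl, by simp, by simp⟩
  | succ n ih =>
    intro a b h
    have hq1 : q ∣ a * b := dvd_trans (dvd_pow_self q (Nat.succ_ne_zero n)) h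
    rcases hq.dvd_mul.1 hq1 with ⟨a', rfl⟩ | ⟨b', rfl⟩
    · have : q ^ n ∣ a' * b := by
        have h' : q * q ^ n ∣ q * (a' * b) := by
          have e1 : q * q ^ n = q ^ (n + 1) := (pow_succ' q n).symm
          have e2 : q * (a' * b) = q * a' * b := (mul_assoc q a' b).symm
          rw [e1, e2]; exact h
        exact (mul_dvd_mul_iff_left hq.ne_zero).1 h'
      obtain ⟨i, j, hij, hi, hj⟩ := ih a' b this
      refine ⟨i + 1, j, by omega, ?_, hj⟩
      have e : q ^ (i + 1) = q * q ^ i := pow_succ' q i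
      rw [e]; exact mul_dvd_mul dvd_rfl hi
    · have : q ^ n ∣ a * b' := by
        have h' : q * q ^ n ∣ q * (a * b') := by
          have e1 : q * q ^ n = q ^ (n + 1) := (pow_succ' q n).symm
          have e2 : q * (a * b') = a * (q * b') := mul_left_comm q a b'
          rw [e1, e2]; exact h
        exact (mul_dvd_mul_iff_left hq.ne_zero).1 h'
      obtain ⟨i, j, hij, hi, hj⟩ := ih a b' this
      refine ⟨i, j + 1, by omega, hi, ?_⟩
      have e : q ^ (j + 1) = q * q ^ j := pow_succ' q j
      rw [e]; exact mul_dvd_mul dvd_rfl hj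

end Aux

/-- For a prime `p`, `z ∈ ℤ_p` and integers `k, l ≥ 0`, the Haar volume of the set of
`x ∈ ℤ_p` with `p^k ∣ x*(x - p^l) - z` is at most `2 p^{-⌈k/2⌉}`.
(Here `⌈k/2⌉ = (k+1)/2` with natural number division.) -/
theorem stmt15 (p : ℕ) [Fact p.Prime] (z : ℤ_[p]) (k l : ℕ) :
    padicHaar p {x : ℤ_[p] | (p : ℤ_[p]) ^ k ∣ x * (x - (p : ℤ_[p]) ^ l) - z}
      ≤ 2 * ((p : ℝ≥0∞) ^ ((k + 1) / 2))⁻¹ := by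
  set m := (k + 1) / 2 with hm
  set S := {x : ℤ_[p] | (p : ℤ_[p]) ^ k ∣ x * (x - (p : ℤ_[p]) ^ l) - z} with hS
  rcases Set.eq_empty_or_nonempty S with hSe | ⟨x₀, hx₀⟩
  · rw [hSe]; simp
  -- S is contained in two cosets of p^m ℤ_p
  have hsub : S ⊆ {x : ℤ_[p] | (p : ℤ_[p]) ^ m ∣ x - x₀}
      ∪ {x : ℤ_[p] | (p : ℤ_[p]) ^ m ∣ x - ((p : ℤ_[p]) ^ l - x₀)} := by
    intro y hy
    have hdiff : (p : ℤ_[p]) ^ k ∣ (y - x₀) * (y + x₀ - (p : ℤ_[p]) ^ l) := by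
      have h1 : (p : ℤ_[p]) ^ k ∣ (y * (y - (p : ℤ_[p]) ^ l) - z)
          - (x₀ * (x₀ - (p : ℤ_[p]) ^ l) - z) := dvd_sub hy hx₀
      have he : (y * (y - (p : ℤ_[p]) ^ l) - z) - (x₀ * (x₀ - (p : ℤ_[p]) ^ l) - z)
          = (y - x₀) * (y + x₀ - (p : ℤ_[p]) ^ l) := by ring
      rwa [he] at h1
    obtain ⟨i, j, hij, hi, hj⟩ :=
      prime_pow_dvd_of_dvd_mul PadicInt.prime_p k _ _ hdiff
    rcases le_or_gt m i with him | him
    · left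
      exact dvd_trans (pow_dvd_pow _ him) hi
    · right
      have hjm : m ≤ j := by omega
      have : (p : ℤ_[p]) ^ m ∣ y + x₀ - (p : ℤ_[p]) ^ l :=
        dvd_trans (pow_dvd_pow _ hjm) hj
      have he : y - ((p : ℤ_[p]) ^ l - x₀) = y + x₀ - (p : ℤ_[p]) ^ l := by ring
      rwa [Set.mem_setOf_eq, he]
  calc padicHaar p S
      ≤ padicHaar p ({x : ℤ_[p] | (p : ℤ_[p]) ^ m ∣ x - x₀}
          ∪ {x : ℤ_[p] | (p : ℤ_[p]) ^ m ∣ x - ((p : ℤ_[p]) ^ l - x₀)}) :=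
        measure_mono hsub
    _ ≤ padicHaar p {x : ℤ_[p] | (p : ℤ_[p]) ^ m ∣ x - x₀}
          + padicHaar p {x : ℤ_[p] | (p : ℤ_[p]) ^ m ∣ x - ((p : ℤ_[p]) ^ l - x₀)} :=
        measure_union_le _ _
    _ = ((p : ℝ≥0∞) ^ m)⁻¹ + ((p : ℝ≥0∞) ^ m)⁻¹ := by
        rw [padicHaar_coset, padicHaar_coset, padicHaar_pow_dvd]
    _ = 2 * ((p : ℝ≥0∞) ^ m)⁻¹ := by ring
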